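/- For any n ≥ 1 and natural numbers a ≥ b ≥ 1, the sum a^n + ∑_{t=1}^{⌊n/2⌋} (n/(n-t)) · C(n - t, t) · b^t · a^{n - 2t} equals V_n(a, -b), the n-th term of the Lucas sequence of the second kind with parameters (a, -b). -/

import Mathlib

/-- Lucas sequence of the first kind: `U 0 = 0`, `U 1 = 1`,
`U (n+2) = P * U (n+1) - Q * U n`. -/
def lucasU (P Q : ℤ) : ℕ → ℤ
  | 0 => 0
  | 1 => 1
  | n + 2 => P * lucasU P Q (n + 1) - Q * lucasU P Q n

/-- Lucas sequence of the second kind: `V 0 = 2`, `V 1 = P`,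
`V (n+2) = P * V (n+1) - Q * V n`. -/
def lucasV (P Q : ℤ) : ℕ → ℤ
  | 0 => 2
  | 1 => P
  | n + 2 => P * lucasV P Q (n + 1) - Q * lucasV P Q n

def Fpoly (a b : ℤ) (n : ℕ) : ℤ :=
  ∑ t ∈ Finset.range (n + 1), ((n - t).choose t : ℤ) * b ^ t * a ^ (n - 2 * t)

lemma choose_zero_of (n t : ℕ) (h : n < 2 * t) : (n - t).choose t = 0 :=
  Nat.choose_eq_zero_of_lt (by omega)

lemma Fpoly_rec (a b : ℤ) (n : ℕ) :
    Fpoly a b (n + 2) = a * Fpoly a b (n + 1) + b * Fpoly a b n := by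
  have hF2 : Fpoly a b (n + 2)
      = a ^ (n + 2) + ∑ t ∈ Finset.range (n + 1),
        (((n - t).choose t + (n - t).choose (t + 1) : ℕ) : ℤ) * b ^ (t + 1) * a ^ (n - 2 * t) := by
    rw [Fpoly, Finset.sum_range_succ' _ (n + 2)]
    rw [Finset.sum_range_succ]
    have h0 : ((n + 2 - (n + 1 + 1)).choose (n + 1 + 1) : ℤ) * b ^ (n + 1 + 1) *
        a ^ (n + 2 - 2 * (n + 1 + 1)) = 0 := by
      rw [choose_zero_of _ _ (by omega)]; push_cast; ring
    rw [h0, add_zero]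
    simp only [Nat.choose_zero_right]
    rw [add_comm]
    congr 1
    · push_cast; ring
    apply Finset.sum_congr rfl
    intro t ht
    simp only [Finset.mem_range] at ht
    have h1 : n + 2 - (t + 1) = (n - t) + 1 := by omega
    have h2 : n + 2 - 2 * (t + 1) = n - 2 * t := by omega
    rw [h1, h2, Nat.choose_succ_succ]
  have hA : a * Fpoly a b (n + 1)
      = a ^ (n + 2) + ∑ t ∈ Finset.range (n + 1),
        (((n - t).choose (t + 1) : ℕ) : ℤ) * b ^ (t + 1) * a ^ (n - 2 * t) := by
    rw [Fpoly, Finset.mul_sum, Finset.sum_range_succ' _ (n + 1)]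
    rw [add_comm]
    congr 1
    · simp [pow_succ]; ring
    apply Finset.sum_congr rfl
    intro t ht
    simp only [Finset.mem_range] at ht
    have h1 : n + 1 - (t + 1) = n - t := by omega
    rw [h1]
    by_cases hc : n < 2 * t + 1
    · rw [Nat.choose_eq_zero_of_lt (by omega)]; push_cast; ring
    · have h2 : n + 1 - 2 * (t + 1) = (n - 2 * t) - 1 := by omega
      have h3 : n - 2 * t = ((n - 2 * t) - 1) + 1 := by omega
      rw [h2, h3]
      push_cast
      ring
  have hB : b * Fpoly a b n
      = ∑ t ∈ Finset.range (n + 1),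
        (((n - t).choose t : ℕ) : ℤ) * b ^ (t + 1) * a ^ (n - 2 * t) := by
    rw [Fpoly, Finset.mul_sum]
    apply Finset.sum_congr rfl
    intro t _
    push_cast; ring
  rw [hF2, hA, hB, add_assoc]
  congr 1
  rw [← Finset.sum_add_distrib]
  apply Finset.sum_congr rfl
  intro t _
  push_cast; ring

lemma V_eq_F (a b : ℤ) : ∀ n : ℕ, lucasV a (-b) (n + 2) = Fpoly a b (n + 2) + b * Fpoly a b n
  | 0 => by
      simp [lucasV, Fpoly, Finset.sum_range_succ]
      ring
  | 1 => by
      simp [lucasV, Fpoly, Finset.sum_range_succ]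
      ring
  | (n + 2) => by
      have h1 := V_eq_F a b n
      have h2 := V_eq_F a b (n + 1)
      have hv : lucasV a (-b) (n + 2 + 2)
          = a * lucasV a (-b) (n + 2 + 1) - (-b) * lucasV a (-b) (n + 2) := rfl
      have hr := Fpoly_rec a b (n + 2)
      rw [hv]
      have : n + 2 + 1 = (n + 1) + 2 := by ring
      rw [this, h2, h1]
      rw [show n + 2 + 2 = (n + 2) + 2 from rfl, hr, Fpoly_rec a b n]
      ring

lemma coeff_eq (n t : ℕ) (ht1 : 1 ≤ t) (ht2 : 2 * t ≤ n) :
    n * (n - t).choose t / (n - t) = (n - t).choose t + (n - t - 1).choose (t - 1) := by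
  have key : t * (n - t).choose t = (n - t) * (n - t - 1).choose (t - 1) := by
    have h := Nat.add_one_mul_choose_eq (n - t - 1) (t - 1)
    have h1 : (n - t - 1) + 1 = n - t := by omega
    have h2 : (t - 1) + 1 = t := by omega
    rw [h1, h2] at h
    rw [mul_comm]
    exact h.symm
  have hn : n * (n - t).choose t
      = (n - t) * ((n - t).choose t + (n - t - 1).choose (t - 1)) := by
    have hsplit : n = (n - t) + t := by omega
    calc n * (n - t).choose t = (n - t) * (n - t).choose t + t * (n - t).choose t := by
          rw [← add_mul, ← hsplit]
      _ = (n - t) * (n - t).choose t + (n - t) * (n - t - 1).choose (t - 1) := by rw [key]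
      _ = (n - t) * ((n - t).choose t + (n - t - 1).choose (t - 1)) := by ring
  rw [hn, Nat.mul_div_cancel_left _ (by omega : 0 < n - t)]

theorem sum_cycle_terms_eq_lucasV (n a b : ℕ) (hn : 1 ≤ n) (hb : 1 ≤ b) (hab : b ≤ a) :
    (a : ℤ) ^ n + ∑ t ∈ Finset.Icc 1 (n / 2),
        (((n * (n - t).choose t / (n - t) : ℕ)) : ℤ) * (b : ℤ) ^ t * (a : ℤ) ^ (n - 2 * t)
      = lucasV (a : ℤ) (-(b : ℤ)) n := by
  match n, hn with
  | 1, _ =>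
    simp [lucasV]
  | (m + 2), _ =>
    have hneg : lucasV (a : ℤ) (-(b : ℤ)) (m + 2) = Fpoly a b (m + 2) + b * Fpoly a b m :=
      V_eq_F (a : ℤ) (b : ℤ) m
    rw [hneg]
    have hsum : ∑ t ∈ Finset.Icc 1 ((m + 2) / 2),
          ((((m + 2) * (m + 2 - t).choose t / (m + 2 - t) : ℕ)) : ℤ) * (b : ℤ) ^ t *
            (a : ℤ) ^ (m + 2 - 2 * t)
        = (∑ t ∈ Finset.Icc 1 ((m + 2) / 2),
            ((m + 2 - t).choose t : ℤ) * (b : ℤ) ^ t * (a : ℤ) ^ (m + 2 - 2 * t))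
          + ∑ t ∈ Finset.Icc 1 ((m + 2) / 2),
            ((m + 2 - t - 1).choose (t - 1) : ℤ) * (b : ℤ) ^ t * (a : ℤ) ^ (m + 2 - 2 * t) := by
      rw [← Finset.sum_add_distrib]
      apply Finset.sum_congr rfl
      intro t ht
      simp only [Finset.mem_Icc] at ht
      rw [coeff_eq (m + 2) t ht.1 (by omega)]
      push_cast
      ring
    rw [hsum]
    have hF : (a : ℤ) ^ (m + 2) + ∑ t ∈ Finset.Icc 1 ((m + 2) / 2),
          ((m + 2 - t).choose t : ℤ) * (b : ℤ) ^ t * (a : ℤ) ^ (m + 2 - 2 * t)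
        = Fpoly a b (m + 2) := by
      have h1 : Fpoly a b (m + 2) = ∑ t ∈ Finset.Icc 0 ((m + 2) / 2),
          ((m + 2 - t).choose t : ℤ) * (b : ℤ) ^ t * (a : ℤ) ^ (m + 2 - 2 * t) := by
        rw [Fpoly]
        refine (Finset.sum_subset ?_ ?_).symm
        · intro x hx
          simp only [Finset.mem_Icc] at hx
          simp only [Finset.mem_range]
          omega
        · intro x hx hnx
          simp only [Finset.mem_range] at hx
          simp only [Finset.mem_Icc] at hnx
          rw [choose_zero_of _ _ (by omega)]
          simp
      have h2 : Finset.Icc 0 ((m + 2) / 2) = insert 0 (Finset.Icc 1 ((m + 2) / 2)) := by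
        ext x
        simp only [Finset.mem_Icc, Finset.mem_insert]
        omega
      rw [h1, h2, Finset.sum_insert (by simp)]
      simp
    have hG : ∑ t ∈ Finset.Icc 1 ((m + 2) / 2),
          ((m + 2 - t - 1).choose (t - 1) : ℤ) * (b : ℤ) ^ t * (a : ℤ) ^ (m + 2 - 2 * t)
        = b * Fpoly a b m := by
      rw [Fpoly, Finset.mul_sum, ← Finset.Ico_add_one_right_eq_Icc, Finset.sum_Ico_eq_sum_range]
      simp only [Nat.add_sub_cancel]
      refine (Finset.sum_subset (s₂ := Finset.range (m + 1)) ?_ ?_).trans ?_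
      · intro x hx
        simp only [Finset.mem_range] at hx ⊢
        omega
      · intro x hx hnx
        simp only [Finset.mem_range] at hx hnx
        rw [show (1 + x) - 1 = x from by omega,
            show m + 2 - (1 + x) - 1 = m - x from by omega,
            Nat.choose_eq_zero_of_lt (by omega)]
        simp
      · apply Finset.sum_congr rfl
        intro x hx
        simp only [Finset.mem_range] at hx
        rw [show m + 2 - (1 + x) - 1 = m - x from by omega,
            show (1 + x) - 1 = x from by omega,
            show m + 2 - 2 * (1 + x) = m - 2 * x from by omega]
        push_cast
        ring
    rw [← add_assoc, hF, hG]
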